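/- Let P be a hierarchical poset on [n] (an ordinal sum of antichains) and 𝔽_q a finite field. Then the equivalence relation E_C on I(P), defined by (I,J) ∈ E_C iff |I| = |J|, is a MacWilliams-type equivalence relation: for all linear P-codes C₁, C₂ ⊆ 𝔽_q^n, if A_{Ī,E_C}(C₁) = A_{Ī,E_C}(C₂) for all order ideals I, then A_{J̄^c,E_C*}(C₁^⊥) = A_{J̄^c,E_C*}(C₂^⊥) for all order ideals J. (Theorem 4.1(ii), (a) ⇒ (b).) -/

import Mathlib

open scoped BigOperators
open Finset

noncomputable section
open scoped Classical

/-- `I ⊆ [n]` is an order ideal with respect to the order relation `le`. -/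
def IsIdeal {n : ℕ} (le : Fin n → Fin n → Prop) (I : Finset (Fin n)) : Prop :=
  ∀ a ∈ I, ∀ b, le b a → b ∈ I

/-- `⟨X⟩_P` : the smallest order ideal (w.r.t. `le`) containing `X`. -/
def idealCl {n : ℕ} (le : Fin n → Fin n → Prop) (X : Finset (Fin n)) : Finset (Fin n) :=
  Finset.univ.filter fun b => ∃ a ∈ X, le b a

/-- `M(A)` : the set of maximal elements of `A` with respect to `le`. -/
def maxSet {n : ℕ} (le : Fin n → Fin n → Prop) (A : Finset (Fin n)) : Finset (Fin n) :=
  A.filter fun a => ∀ b ∈ A, le a b → b = a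

/-- `E` is an equivalence relation on the set of order ideals of the poset `le`. -/
def EqvOnIdeals {n : ℕ} (le : Fin n → Fin n → Prop)
    (E : Finset (Fin n) → Finset (Fin n) → Prop) : Prop :=
  (∀ I J, E I J → IsIdeal le I ∧ IsIdeal le J) ∧
  (∀ I, IsIdeal le I → E I I) ∧
  (∀ I J, E I J → E J I) ∧
  (∀ I J K, E I J → E J K → E I K)

/-- support of a vector -/
def supp {n : ℕ} {F : Type} [Field F] [Fintype F] (v : Fin n → F) : Finset (Fin n) :=
  Finset.univ.filter fun i => v i ≠ 0

/-- standard dot product -/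
def dot {n : ℕ} {F : Type} [Field F] [Fintype F] (u v : Fin n → F) : F := ∑ i, u i * v i

/-- the sphere `S_I = {v : ⟨supp v⟩_P = I}` -/
def sph {n : ℕ} (F : Type) [Field F] [Fintype F] (le : Fin n → Fin n → Prop)
    (I : Finset (Fin n)) : Finset (Fin n → F) :=
  Finset.univ.filter fun v => idealCl le (supp v) = I

/-- the dual sphere `S_{J^c} = {v : ⟨supp v⟩_{P*} = J^c}` -/
def sphD {n : ℕ} (F : Type) [Field F] [Fintype F] (le : Fin n → Fin n → Prop)
    (J : Finset (Fin n)) : Finset (Fin n → F) :=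
  Finset.univ.filter fun v => idealCl (fun a b => le b a) (supp v) = Jᶜ

/-- the `E`-sphere `S_{Ī,E} = {v : (⟨supp v⟩_P, I) ∈ E}` -/
def sphE {n : ℕ} (F : Type) [Field F] [Fintype F] (le : Fin n → Fin n → Prop)
    (E : Finset (Fin n) → Finset (Fin n) → Prop) (I : Finset (Fin n)) :
    Finset (Fin n → F) :=
  Finset.univ.filter fun v => E (idealCl le (supp v)) I

/-- the `E*`-sphere `S_{J̄^c,E*} = {v : ⟨supp v⟩_{P*} = K^c for some ideal K with (K,J) ∈ E}` -/
def sphED {n : ℕ} (F : Type) [Field F] [Fintype F] (le : Fin n → Fin n → Prop)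
    (E : Finset (Fin n) → Finset (Fin n) → Prop) (J : Finset (Fin n)) :
    Finset (Fin n → F) :=
  Finset.univ.filter fun v =>
    ∃ K, IsIdeal le K ∧ E K J ∧ idealCl (fun a b => le b a) (supp v) = Kᶜ

/-- the dual code `C^⊥` -/
def dualCode {n : ℕ} {F : Type} [Field F] [Fintype F] (C : Submodule F (Fin n → F)) :
    Submodule F (Fin n → F) where
  carrier := {u | ∀ v ∈ C, dot u v = 0}
  zero_mem' := by intro v hv; simp [dot]
  add_mem' := by
    intro a b ha hb v hv
    have h1 := ha v hv
    have h2 := hb v hv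
    simp only [dot, Pi.add_apply] at *
    simp [add_mul, Finset.sum_add_distrib, h1, h2]
  smul_mem' := by
    intro c a ha v hv
    have h1 := ha v hv
    simp only [dot, Pi.smul_apply, smul_eq_mul] at *
    simp [mul_assoc, ← Finset.mul_sum, h1]

/-- `A_{Ī,E}(C) = |C ∩ S_{Ī,E}|` -/
def AE {n : ℕ} {F : Type} [Field F] [Fintype F] (le : Fin n → Fin n → Prop)
    (E : Finset (Fin n) → Finset (Fin n) → Prop)
    (C : Submodule F (Fin n → F)) (I : Finset (Fin n)) : ℕ :=
  ((sphE F le E I).filter fun v => v ∈ C).card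

/-- `A_{J̄^c,E*}(D) = |D ∩ S_{J̄^c,E*}|` -/
def AED {n : ℕ} {F : Type} [Field F] [Fintype F] (le : Fin n → Fin n → Prop)
    (E : Finset (Fin n) → Finset (Fin n) → Prop)
    (D : Submodule F (Fin n → F)) (J : Finset (Fin n)) : ℕ :=
  ((sphED F le E J).filter fun v => v ∈ D).card

/-- `E` is a MacWilliams-type equivalence relation (w.r.t. the field `F`). -/
def IsMacWilliamsType {n : ℕ} (F : Type) [Field F] [Fintype F]
    (le : Fin n → Fin n → Prop) (E : Finset (Fin n) → Finset (Fin n) → Prop) : Prop :=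
  ∀ C₁ C₂ : Submodule F (Fin n → F),
    (∀ I, IsIdeal le I → AE le E C₁ I = AE le E C₂ I) →
    ∀ J, IsIdeal le J → AED le E (dualCode C₁) J = AED le E (dualCode C₂) J

/-- a hierarchical poset (ordinal sum of antichains) -/
def IsHierarchical {n : ℕ} (le : Fin n → Fin n → Prop) : Prop :=
  ∃ l : Fin n → ℕ, ∀ i j, (le i j ∧ i ≠ j) ↔ l i < l j

/-- `σ` is an automorphism of the poset `le`. -/
def IsAut {n : ℕ} (le : Fin n → Fin n → Prop) (σ : Equiv.Perm (Fin n)) : Prop :=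
  ∀ x y, le x y ↔ le (σ x) (σ y)

/-- `A` and `B` are order-isomorphic with the induced orders. -/
def OrdIso {n : ℕ} (le : Fin n → Fin n → Prop) (A B : Finset (Fin n)) : Prop :=
  ∃ e : {x // x ∈ A} ≃ {x // x ∈ B}, ∀ a b : {x // x ∈ A}, le ↑a ↑b ↔ le ↑(e a) ↑(e b)


namespace Aux14
variable {n : ℕ} {F : Type} [Field F] [Fintype F]

/-- vectors supported on `T` -/
def VT (F : Type) [Field F] [Fintype F] (T : Finset (Fin n)) : Submodule F (Fin n → F) where
  carrier := {v | ∀ i, i ∉ T → v i = 0}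
  zero_mem' := by intro i _; rfl
  add_mem' := by intro a b ha hb i hi; simp [Pi.add_apply, ha i hi, hb i hi]
  smul_mem' := by intro c a ha i hi; simp [Pi.smul_apply, ha i hi]

lemma mem_VT {T : Finset (Fin n)} {v : Fin n → F} : v ∈ VT F T ↔ supp v ⊆ T := by
  constructor
  · intro h i hi
    simp only [supp, mem_filter, mem_univ, true_and] at hi
    by_contra hiT
    exact hi (h i hiT)
  · intro h i hi
    by_contra hne
    exact hi (h (by simp [supp, hne]))

/-- the bilinear map `dot` -/
def dotL : (Fin n → F) →ₗ[F] (Fin n → F) →ₗ[F] F :=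
  LinearMap.mk₂ F dot
    (by intro m₁ m₂ v; simp [dot, add_mul, Finset.sum_add_distrib])
    (by intro c m v; simp only [dot, smul_eq_mul, Pi.smul_apply, Finset.mul_sum]; exact Finset.sum_congr rfl fun i _ => by ring)
    (by intro m v₁ v₂; simp [dot, mul_add, Finset.sum_add_distrib])
    (by intro c m v; simp only [dot, smul_eq_mul, Pi.smul_apply, Finset.mul_sum]; exact Finset.sum_congr rfl fun i _ => by ring)

lemma dotL_apply (u v : Fin n → F) : (dotL : (Fin n → F) →ₗ[F] (Fin n → F) →ₗ[F] F) u v = dot u v :=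
  rfl

lemma finrank_VT (T : Finset (Fin n)) :
    Module.finrank F (VT F T) = T.card := by
  have e : VT F T ≃ₗ[F] ({x // x ∈ T} → F) :=
    { toFun := fun v i => (v : Fin n → F) i
      map_add' := by intro a b; rfl
      map_smul' := by intro c a; rfl
      invFun := fun g => ⟨fun j => if h : j ∈ T then g ⟨j, h⟩ else 0, by
        intro i hi; simp [hi]⟩
      left_inv := by
        intro v; ext j
        by_cases h : j ∈ T
        · simp [h]
        · simp [h, (v.2 j h).symm]
      right_inv := by intro g; ext i; simp }
  rw [e.finrank_eq, Module.finrank_fintype_fun_eq_card, Fintype.card_coe]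

lemma KL_rank (C : Submodule F (Fin n → F)) (T : Finset (Fin n)) :
    Module.finrank F (dualCode C ⊓ VT F T : Submodule F (Fin n → F)) + Module.finrank F C
      = T.card + Module.finrank F (C ⊓ VT F Tᶜ : Submodule F (Fin n → F)) := by
  set B : (VT F T : Submodule F (Fin n → F)) →ₗ[F] (C →ₗ[F] F) :=
    (dotL.domRestrict₁₂ (VT F T) C) with hB
  have hker : LinearMap.ker B = Submodule.comap (VT F T).subtype (dualCode C ⊓ VT F T) := by
    ext v
    simp only [LinearMap.mem_ker, Submodule.mem_comap, Submodule.mem_inf]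
    constructor
    · intro h
      refine ⟨?_, v.2⟩
      intro u hu
      have := congrArg (fun f => f ⟨u, hu⟩) h
      simpa [hB, dotL_apply, LinearMap.domRestrict₁₂_apply] using this
    · intro h
      ext c
      simpa [hB, dotL_apply, LinearMap.domRestrict₁₂_apply] using h.1 c.1 c.2
  have hkerflip : LinearMap.ker B.flip = Submodule.comap C.subtype (C ⊓ VT F Tᶜ) := by
    ext c
    simp only [LinearMap.mem_ker, Submodule.mem_comap, Submodule.mem_inf]
    constructor
    · intro h
      refine ⟨c.2, ?_⟩
      intro i hi
      have hiT : i ∈ T := by simpa using hi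
      have hv : (Pi.single i (1:F)) ∈ VT F T := by
        intro j hj
        have : j ≠ i := by rintro rfl; exact hj hiT
        simp [Pi.single_eq_of_ne this]
      have := congrArg (fun f => f ⟨Pi.single i (1:F), hv⟩) h
      simp only [hB, LinearMap.flip_apply, LinearMap.domRestrict₁₂_apply, dotL_apply,
        LinearMap.mk₂_apply, LinearMap.zero_apply] at this
      rw [dot] at this
      rw [Finset.sum_eq_single i (by intro b _ hbne; simp [Pi.single_eq_of_ne hbne]) (by simp)] at this
      simpa using this
    · intro h
      ext v
      simp only [hB, LinearMap.flip_apply, LinearMap.domRestrict₁₂_apply, dotL_apply,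
        LinearMap.mk₂_apply, LinearMap.zero_apply]
      rw [dot]
      apply Finset.sum_eq_zero
      intro j _
      by_cases hj : j ∈ T
      · have : (c : Fin n → F) j = 0 := h.2 j (by simpa using hj)
        simp [this]
      · simp [v.2 j hj]
  have hrn1 : Module.finrank F (LinearMap.range B) + Module.finrank F (LinearMap.ker B)
      = Module.finrank F (VT F T : Submodule F (Fin n → F)) :=
    LinearMap.finrank_range_add_finrank_ker B
  have hrn2 : Module.finrank F (LinearMap.range B.flip) + Module.finrank F (LinearMap.ker B.flip)
      = Module.finrank F C :=
    LinearMap.finrank_range_add_finrank_ker B.flip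
  have hflipeq : B.flip = B.dualMap.comp (Module.Dual.eval F C) := by
    ext c v
    rfl
  have hrange : Module.finrank F (LinearMap.range B.flip)
      = Module.finrank F (LinearMap.range B) := by
    have hsurj : Function.Surjective (Module.Dual.eval F ↥C) := by
      rw [← Module.evalEquiv_toLinearMap]; exact (Module.evalEquiv F ↥C).surjective
    rw [hflipeq, LinearMap.range_comp_of_range_eq_top _ (LinearMap.range_eq_top.2 hsurj)]
    exact LinearMap.finrank_range_dualMap_eq_finrank_range B
  have e1 : Module.finrank F (LinearMap.ker B)
      = Module.finrank F (dualCode C ⊓ VT F T : Submodule F (Fin n → F)) := by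
    rw [hker]
    exact (Submodule.comapSubtypeEquivOfLe inf_le_right).finrank_eq
  have e2 : Module.finrank F (LinearMap.ker B.flip)
      = Module.finrank F (C ⊓ VT F Tᶜ : Submodule F (Fin n → F)) := by
    rw [hkerflip]
    exact (Submodule.comapSubtypeEquivOfLe inf_le_left).finrank_eq
  have hVT := finrank_VT (F := F) T
  omega


def cw (C : Submodule F (Fin n → F)) (T : Finset (Fin n)) : ℕ :=
  (Finset.univ.filter fun v : Fin n → F => v ∈ C ∧ supp v ⊆ T).card

def cC (C : Submodule F (Fin n → F)) : ℕ :=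
  (Finset.univ.filter fun v : Fin n → F => v ∈ C).card

lemma cC_eq (C : Submodule F (Fin n → F)) : cC C = Fintype.card C := by
  rw [Fintype.card_subtype]; rfl

lemma cw_eq (C : Submodule F (Fin n → F)) (T : Finset (Fin n)) :
    cw C T = Fintype.card ↥(C ⊓ VT F T : Submodule F (Fin n → F)) := by
  have h : Fintype.card ↥(C ⊓ VT F T : Submodule F (Fin n → F))
      = Fintype.card {v : Fin n → F // v ∈ C ∧ supp v ⊆ T} :=
    Fintype.card_congr (Equiv.subtypeEquivRight (fun v => by
      simp [Submodule.mem_inf, mem_VT]))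
  rw [h, Fintype.card_subtype]; rfl

lemma card_submodule (M : Submodule F (Fin n → F)) :
    Fintype.card M = (Fintype.card F) ^ Module.finrank F M :=
  Module.card_eq_pow_finrank

lemma KL (C : Submodule F (Fin n → F)) (T : Finset (Fin n)) :
    cw (dualCode C) T * cC C = (Fintype.card F) ^ T.card * cw C Tᶜ := by
  rw [cw_eq, cw_eq, cC_eq, card_submodule, card_submodule, card_submodule,
    ← pow_add, ← pow_add, KL_rank]

lemma cC_pos (C : Submodule F (Fin n → F)) : 0 < cC C := by
  rw [cC_eq]; exact Fintype.card_pos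


variable {n : ℕ} {F : Type} [Field F] [Fintype F]

def Lv (ℓ : Fin n → ℕ) (s : ℕ) : Finset (Fin n) := Finset.univ.filter fun i => ℓ i = s

def Bl (ℓ : Fin n → ℕ) (s : ℕ) : Finset (Fin n) := Finset.univ.filter fun i => ℓ i < s

def cwk (le : Fin n → Fin n → Prop) (C : Submodule F (Fin n → F)) (k : ℕ) : ℕ :=
  (Finset.univ.filter fun v : Fin n → F => v ∈ C ∧ (idealCl le (supp v)).card = k).card

def uS (ℓ : Fin n → ℕ) (C : Submodule F (Fin n → F)) (s i : ℕ) : ℕ :=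
  (Finset.univ.filter fun v : Fin n → F =>
    v ∈ C ∧ supp v ⊆ Bl ℓ s ∪ Lv ℓ s ∧ (supp v ∩ Lv ℓ s).card = i).card

def tmax {n : ℕ} (ℓ : Fin n → ℕ) (S : Finset (Fin n)) : ℕ :=
  if h : S.Nonempty then (S.image ℓ).max' (h.image ℓ) else 0

lemma supp_eq_empty {v : Fin n → F} : supp v = ∅ ↔ v = 0 := by
  constructor
  · intro h; funext i
    simp only [Pi.zero_apply]
    by_contra hne
    have : i ∈ supp v := by simp [supp, hne]
    simp [h] at this
  · intro h; subst h; simp [supp]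

lemma tmax_le {ℓ : Fin n → ℕ} {S : Finset (Fin n)} (hS : S.Nonempty) {k : Fin n}
    (hk : k ∈ S) : ℓ k ≤ tmax ℓ S := by
  rw [tmax, dif_pos hS]
  exact Finset.le_max' _ _ (Finset.mem_image_of_mem ℓ hk)

lemma tmax_mem {ℓ : Fin n → ℕ} {S : Finset (Fin n)} (hS : S.Nonempty) :
    ∃ k ∈ S, ℓ k = tmax ℓ S := by
  rw [tmax, dif_pos hS]
  have := (S.image ℓ).max'_mem (hS.image ℓ)
  simpa using this

lemma mem_Bl {ℓ : Fin n → ℕ} {s : ℕ} {k : Fin n} : k ∈ Bl ℓ s ↔ ℓ k < s := by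
  simp [Bl]

lemma mem_Lv {ℓ : Fin n → ℕ} {s : ℕ} {k : Fin n} : k ∈ Lv ℓ s ↔ ℓ k = s := by
  simp [Lv]

lemma mem_BlLv {ℓ : Fin n → ℕ} {s : ℕ} {k : Fin n} :
    k ∈ Bl ℓ s ∪ Lv ℓ s ↔ ℓ k ≤ s := by
  simp [Bl, Lv, Finset.mem_union, le_iff_lt_or_eq]

lemma disj_Bl_Lv {ℓ : Fin n → ℕ} {s : ℕ} : Disjoint (Bl ℓ s) (Lv ℓ s) := by
  rw [Finset.disjoint_left]
  intro a ha hb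
  rw [mem_Bl] at ha; rw [mem_Lv] at hb; omega

lemma Bl_mono {ℓ : Fin n → ℕ} {s t : ℕ} (h : s ≤ t) : Bl ℓ s ⊆ Bl ℓ t := by
  intro k hk; rw [mem_Bl] at *; omega

lemma card_BlLv_le {ℓ : Fin n → ℕ} {t s : ℕ} (h : t < s) :
    (Bl ℓ t).card + (Lv ℓ t).card ≤ (Bl ℓ s).card := by
  rw [← Finset.card_union_of_disjoint disj_Bl_Lv]
  apply Finset.card_le_card
  intro k hk
  rw [mem_BlLv] at hk; rw [mem_Bl]; omega

section Char
variable {le : Fin n → Fin n → Prop} {ℓ : Fin n → ℕ}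

lemma idealCl_empty : idealCl le (∅ : Finset (Fin n)) = ∅ := by
  simp [idealCl]

lemma cl_eq (hc : ∀ i j, le i j ↔ i = j ∨ ℓ i < ℓ j) {S : Finset (Fin n)} (hS : S.Nonempty) :
    idealCl le S = Bl ℓ (tmax ℓ S) ∪ (S ∩ Lv ℓ (tmax ℓ S)) := by
  obtain ⟨a₀, ha₀, ha₀t⟩ := tmax_mem (ℓ := ℓ) hS
  ext b
  simp only [idealCl, Finset.mem_filter, Finset.mem_univ, true_and, Finset.mem_union,
    Finset.mem_inter, mem_Bl, mem_Lv]
  constructor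
  · rintro ⟨a, haS, hba⟩
    rcases (hc b a).1 hba with rfl | hlt
    · rcases lt_or_eq_of_le (tmax_le (ℓ := ℓ) hS haS) with h | h
      · exact Or.inl h
      · exact Or.inr ⟨haS, h⟩
    · exact Or.inl (lt_of_lt_of_le hlt (tmax_le (ℓ := ℓ) hS haS))
  · rintro (h | ⟨hbS, _⟩)
    · exact ⟨a₀, ha₀, (hc b a₀).2 (Or.inr (by omega))⟩
    · exact ⟨b, hbS, (hc b b).2 (Or.inl rfl)⟩

lemma cl_card (hc : ∀ i j, le i j ↔ i = j ∨ ℓ i < ℓ j) {S : Finset (Fin n)} (hS : S.Nonempty) :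
    (idealCl le S).card = (Bl ℓ (tmax ℓ S)).card + (S ∩ Lv ℓ (tmax ℓ S)).card := by
  rw [cl_eq hc hS, Finset.card_union_of_disjoint]
  exact Finset.disjoint_of_subset_right (Finset.inter_subset_right) disj_Bl_Lv

lemma one_le_inter {ℓ : Fin n → ℕ} {S : Finset (Fin n)} (hS : S.Nonempty) :
    1 ≤ (S ∩ Lv ℓ (tmax ℓ S)).card := by
  obtain ⟨a₀, ha₀, ha₀t⟩ := tmax_mem (ℓ := ℓ) hS
  rw [Nat.one_le_iff_ne_zero, Ne, Finset.card_eq_zero]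
  intro h
  have : a₀ ∈ S ∩ Lv ℓ (tmax ℓ S) := by
    rw [Finset.mem_inter, mem_Lv]; exact ⟨ha₀, ha₀t⟩
  simp [h] at this

lemma tmax_eq_of {ℓ : Fin n → ℕ} {S : Finset (Fin n)} {s : ℕ} (hS : S.Nonempty)
    (hle : ∀ k ∈ S, ℓ k ≤ s) (hex : (S ∩ Lv ℓ s).Nonempty) : tmax ℓ S = s := by
  obtain ⟨a₀, ha₀⟩ := hex
  rw [Finset.mem_inter, mem_Lv] at ha₀
  obtain ⟨b₀, hb₀, hb₀t⟩ := tmax_mem (ℓ := ℓ) hS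
  have h1 := tmax_le (ℓ := ℓ) hS ha₀.1
  have h2 := hle b₀ hb₀
  omega

/-- forward description : a vector in the `uS`-class has closure cardinality `N s + i` -/
lemma KDf (hc : ∀ i j, le i j ↔ i = j ∨ ℓ i < ℓ j) {s i : ℕ} (h1 : 1 ≤ i) {S : Finset (Fin n)}
    (h : S ⊆ Bl ℓ s ∪ Lv ℓ s ∧ (S ∩ Lv ℓ s).card = i) :
    (idealCl le S).card = (Bl ℓ s).card + i := by
  obtain ⟨hsub, hcard⟩ := h
  have hex : (S ∩ Lv ℓ s).Nonempty := by
    rw [← Finset.card_pos, hcard]; omega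
  have hS : S.Nonempty := by
    obtain ⟨a, ha⟩ := hex
    exact ⟨a, (Finset.mem_inter.1 ha).1⟩
  have ht : tmax ℓ S = s :=
    tmax_eq_of hS (fun k hk => mem_BlLv.1 (hsub hk)) hex
  rw [cl_card hc hS, ht, hcard]

/-- backward description -/
lemma KDb (hc : ∀ i j, le i j ↔ i = j ∨ ℓ i < ℓ j) {s i : ℕ} (h1 : 1 ≤ i) (hin : i ≤ (Lv ℓ s).card) {S : Finset (Fin n)}
    (h : (idealCl le S).card = (Bl ℓ s).card + i) :
    S ⊆ Bl ℓ s ∪ Lv ℓ s ∧ (S ∩ Lv ℓ s).card = i := by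
  have hS : S.Nonempty := by
    rcases S.eq_empty_or_nonempty with rfl | hS
    · rw [idealCl_empty] at h; simp at h; omega
    · exact hS
  have hcl := cl_card hc hS
  have hi0 : 1 ≤ (S ∩ Lv ℓ (tmax ℓ S)).card := one_le_inter hS
  have hi0' : (S ∩ Lv ℓ (tmax ℓ S)).card ≤ (Lv ℓ (tmax ℓ S)).card :=
    Finset.card_le_card Finset.inter_subset_right
  have hts : tmax ℓ S = s := by
    rcases Nat.lt_trichotomy (tmax ℓ S) s with hlt | heq | hgt
    · have := card_BlLv_le (ℓ := ℓ) hlt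
      omega
    · exact heq
    · have h1' := card_BlLv_le (ℓ := ℓ) hgt
      omega
  rw [hts] at hcl
  constructor
  · intro k hk
    rw [mem_BlLv]
    have := tmax_le (ℓ := ℓ) hS hk
    omega
  · omega

/-- the `i = 0` description -/
lemma KD0 (hc : ∀ i j, le i j ↔ i = j ∨ ℓ i < ℓ j) {s : ℕ} {S : Finset (Fin n)} :
    (S ⊆ Bl ℓ s ∪ Lv ℓ s ∧ (S ∩ Lv ℓ s).card = 0) ↔
      (idealCl le S).card < (Bl ℓ s).card + 1 := by
  constructor
  · rintro ⟨hsub, hcard⟩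
    have hsub' : S ⊆ Bl ℓ s := by
      intro k hk
      have h1 := mem_BlLv.1 (hsub hk)
      rw [mem_Bl]
      rcases lt_or_eq_of_le h1 with h | h
      · exact h
      · exfalso
        have : k ∈ S ∩ Lv ℓ s := by rw [Finset.mem_inter, mem_Lv]; exact ⟨hk, h⟩
        rw [Finset.card_eq_zero] at hcard
        simp [hcard] at this
    rcases S.eq_empty_or_nonempty with rfl | hS
    · rw [idealCl_empty]; simp
    · have htlt : tmax ℓ S < s := by
        obtain ⟨k₀, hk₀, hk₀t⟩ := tmax_mem (ℓ := ℓ) hS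
        have := mem_Bl.1 (hsub' hk₀)
        omega
      have := card_BlLv_le (ℓ := ℓ) htlt
      have h2 : (S ∩ Lv ℓ (tmax ℓ S)).card ≤ (Lv ℓ (tmax ℓ S)).card :=
        Finset.card_le_card Finset.inter_subset_right
      rw [cl_card hc hS]
      omega
  · intro h
    rcases S.eq_empty_or_nonempty with rfl | hS
    · simp
    · have hcl := cl_card hc hS
      have hi0 : 1 ≤ (S ∩ Lv ℓ (tmax ℓ S)).card := one_le_inter hS
      have htlt : tmax ℓ S < s := by
        by_contra hge
        have : Bl ℓ s ⊆ Bl ℓ (tmax ℓ S) := Bl_mono (by omega)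
        have := Finset.card_le_card this
        omega
      have hsub : S ⊆ Bl ℓ s := by
        intro k hk
        rw [mem_Bl]
        have := tmax_le (ℓ := ℓ) hS hk
        omega
      constructor
      · exact hsub.trans Finset.subset_union_left
      · rw [Finset.card_eq_zero, ← Finset.disjoint_iff_inter_eq_empty]
        apply Finset.disjoint_left.2
        intro a ha hla
        have := mem_Bl.1 (hsub ha)
        rw [mem_Lv] at hla
        omega

/-- description via `tmax` fibers -/
lemma KT {s i : ℕ} (h1 : 1 ≤ i) {S : Finset (Fin n)} :
    (S ⊆ Bl ℓ s ∪ Lv ℓ s ∧ (S ∩ Lv ℓ s).card = i) ↔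
      (tmax ℓ S = s ∧ (S ∩ Lv ℓ (tmax ℓ S)).card = i) := by
  constructor
  · rintro ⟨hsub, hcard⟩
    have hex : (S ∩ Lv ℓ s).Nonempty := by rw [← Finset.card_pos, hcard]; omega
    have hS : S.Nonempty := by
      obtain ⟨a, ha⟩ := hex; exact ⟨a, (Finset.mem_inter.1 ha).1⟩
    have ht : tmax ℓ S = s := tmax_eq_of hS (fun k hk => mem_BlLv.1 (hsub hk)) hex
    rw [ht]; exact ⟨rfl, hcard⟩
  · rintro ⟨ht, hcard⟩
    rw [ht] at hcard
    have hS : S.Nonempty := by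
      rcases S.eq_empty_or_nonempty with rfl | hS
      · simp at hcard; omega
      · exact hS
    refine ⟨?_, hcard⟩
    intro k hk
    rw [mem_BlLv]
    have := tmax_le (ℓ := ℓ) hS hk
    omega


lemma filter_card_congr {α : Type*} [Fintype α] {p q : α → Prop}
    {dp : DecidablePred p} {dq : DecidablePred q} (h : ∀ v, p v ↔ q v) :
    (@Finset.filter α p dp Finset.univ).card = (@Finset.filter α q dq Finset.univ).card := by
  apply Finset.card_bij (fun a _ => a)
  · intro a ha
    rw [Finset.mem_filter] at *
    exact ⟨ha.1, (h a).1 ha.2⟩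
  · intro a _ b _ hab
    exact hab
  · intro b hb
    rw [Finset.mem_filter] at hb
    exact ⟨b, Finset.mem_filter.2 ⟨hb.1, (h b).2 hb.2⟩, rfl⟩

lemma GA (hc : ∀ i j, le i j ↔ i = j ∨ ℓ i < ℓ j) (C₁ C₂ : Submodule F (Fin n → F))
    (h : ∀ k, cwk le C₁ k = cwk le C₂ k) (s i : ℕ) :
    uS ℓ C₁ s i = uS ℓ C₂ s i := by
  rcases Nat.eq_zero_or_pos i with rfl | hi
  · have key : ∀ C : Submodule F (Fin n → F), uS ℓ C s 0 =
        ∑ k ∈ Finset.range ((Bl ℓ s).card + 1), cwk le C k := by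
      intro C
      rw [uS, filter_card_congr (q := fun v : Fin n → F =>
        v ∈ C ∧ (idealCl le (supp v)).card < (Bl ℓ s).card + 1)
        (fun v => and_congr_right fun _ => KD0 hc)]
      rw [Finset.card_eq_sum_card_fiberwise
        (f := fun v : Fin n → F => (idealCl le (supp v)).card)
        (t := Finset.range ((Bl ℓ s).card + 1))
        (fun v hv => by
          rw [Finset.mem_coe, Finset.mem_filter] at hv
          rw [Finset.mem_coe, Finset.mem_range]
          exact hv.2.2)]
      apply Finset.sum_congr rfl
      intro k hk
      rw [Finset.mem_range] at hk
      rw [Finset.filter_filter, cwk]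
      apply filter_card_congr
      intro v
      constructor
      · rintro ⟨⟨hvC, _⟩, hcl⟩
        exact ⟨hvC, hcl⟩
      · rintro ⟨hvC, hcl⟩
        exact ⟨⟨hvC, by omega⟩, hcl⟩
    rw [key C₁, key C₂]
    exact Finset.sum_congr rfl fun k _ => h k
  · by_cases hin : i ≤ (Lv ℓ s).card
    · have key : ∀ C : Submodule F (Fin n → F),
          uS ℓ C s i = cwk le C ((Bl ℓ s).card + i) := by
        intro C
        rw [uS, cwk]
        apply filter_card_congr
        intro v
        exact and_congr_right fun _ => ⟨fun hp => KDf hc hi hp, fun hp => KDb hc hi hin hp⟩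
      rw [key C₁, key C₂, h]
    · have key : ∀ C : Submodule F (Fin n → F), uS ℓ C s i = 0 := by
        intro C
        rw [uS, Finset.card_eq_zero, Finset.filter_eq_empty_iff]
        rintro v _ ⟨_, _, hcard⟩
        have : (supp v ∩ Lv ℓ s).card ≤ (Lv ℓ s).card :=
          Finset.card_le_card Finset.inter_subset_right
        omega
      rw [key C₁, key C₂]

def fibG (ℓ : Fin n → ℕ) (v : Fin n → F) : ℕ × ℕ :=
  (tmax ℓ (supp v), (supp v ∩ Lv ℓ (tmax ℓ (supp v))).card)

lemma GC (hc : ∀ i j, le i j ↔ i = j ∨ ℓ i < ℓ j) (C₁ C₂ : Submodule F (Fin n → F))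
    (h : ∀ s i, uS ℓ C₁ s i = uS ℓ C₂ s i) (k : ℕ) :
    cwk le C₁ k = cwk le C₂ k := by
  have hmapsto : ∀ v : Fin n → F,
      fibG ℓ v ∈ (Finset.range (Finset.univ.sup ℓ + 1)) ×ˢ (Finset.range (n + 1)) := by
    intro v
    rw [Finset.mem_product, Finset.mem_range, Finset.mem_range]
    constructor
    · rcases (supp v).eq_empty_or_nonempty with he | hne
      · simp [fibG, he, tmax]
      · obtain ⟨k₀, _, hk₀t⟩ := tmax_mem (ℓ := ℓ) hne
        have h2 : ℓ k₀ ≤ Finset.univ.sup ℓ := Finset.le_sup (Finset.mem_univ k₀)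
        simp only [fibG]
        omega
    · have h3 : (supp v ∩ Lv ℓ (tmax ℓ (supp v))).card ≤ n := by
        calc (supp v ∩ Lv ℓ (tmax ℓ (supp v))).card ≤ Finset.univ.card :=
              Finset.card_le_univ _
          _ = n := by simp
      simp only [fibG]
      omega
  have expand : ∀ C : Submodule F (Fin n → F), cwk le C k =
      ∑ p ∈ (Finset.range (Finset.univ.sup ℓ + 1)) ×ˢ (Finset.range (n + 1)),
        (Finset.univ.filter fun v : Fin n → F =>
          (v ∈ C ∧ (idealCl le (supp v)).card = k) ∧ fibG ℓ v = p).card := by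
    intro C
    rw [cwk]
    rw [Finset.card_eq_sum_card_fiberwise (f := fibG ℓ)
      (t := (Finset.range (Finset.univ.sup ℓ + 1)) ×ˢ (Finset.range (n + 1)))
      (fun v _ => hmapsto v)]
    exact Finset.sum_congr rfl fun p _ => by
      rw [Finset.filter_filter]
  rw [expand C₁, expand C₂]
  apply Finset.sum_congr rfl
  rintro ⟨s, i⟩ _
  rcases Nat.eq_zero_or_pos i with rfl | hi
  · have key : ∀ C : Submodule F (Fin n → F),
        (Finset.univ.filter fun v : Fin n → F =>
          (v ∈ C ∧ (idealCl le (supp v)).card = k) ∧ fibG ℓ v = (s, 0)).card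
        = if k = 0 ∧ s = 0 then 1 else 0 := by
      intro C
      have hpred : ∀ v : Fin n → F,
          ((v ∈ C ∧ (idealCl le (supp v)).card = k) ∧ fibG ℓ v = (s, 0)) ↔
          (v = 0 ∧ k = 0 ∧ s = 0) := by
        intro v
        constructor
        · rintro ⟨⟨hvC, hcl⟩, hfib⟩
          have hfib1 : tmax ℓ (supp v) = s := congrArg Prod.fst hfib
          have hfib2 : (supp v ∩ Lv ℓ (tmax ℓ (supp v))).card = 0 := congrArg Prod.snd hfib
          have hse : supp v = ∅ := by
            rcases (supp v).eq_empty_or_nonempty with he | hne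
            · exact he
            · exfalso
              have := one_le_inter (ℓ := ℓ) hne
              omega
          have hv0 : v = 0 := supp_eq_empty.1 hse
          rw [hse] at hfib1
          rw [hse, idealCl_empty] at hcl
          simp only [tmax, dif_neg (Finset.not_nonempty_empty)] at hfib1
          refine ⟨hv0, ?_, hfib1.symm⟩
          simpa using hcl.symm
        · rintro ⟨rfl, rfl, rfl⟩
          have hse : supp (0 : Fin n → F) = ∅ := supp_eq_empty.2 rfl
          refine ⟨⟨C.zero_mem, ?_⟩, ?_⟩
          · rw [hse, idealCl_empty]; simp
          · rw [fibG, hse]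
            simp [tmax]
      by_cases hks : k = 0 ∧ s = 0
      · rw [if_pos hks]
        rw [filter_card_congr (q := fun v : Fin n → F => v = 0)
          (fun v => by rw [hpred v]; simp [hks.1, hks.2])]
        rw [Finset.filter_eq']
        simp
      · rw [if_neg hks]
        rw [Finset.card_eq_zero, Finset.filter_eq_empty_iff]
        intro v _ hp
        exact hks ⟨((hpred v).1 hp).2.1, ((hpred v).1 hp).2.2⟩
    rw [key C₁, key C₂]
  · have hfib_iff : ∀ v : Fin n → F, fibG ℓ v = (s, i) ↔
        (tmax ℓ (supp v) = s ∧ (supp v ∩ Lv ℓ (tmax ℓ (supp v))).card = i) := by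
      intro v
      rw [fibG, Prod.mk.injEq]
    by_cases hin : i ≤ (Lv ℓ s).card
    · by_cases hk : k = (Bl ℓ s).card + i
      · have key : ∀ C : Submodule F (Fin n → F),
            (Finset.univ.filter fun v : Fin n → F =>
              (v ∈ C ∧ (idealCl le (supp v)).card = k) ∧ fibG ℓ v = (s, i)).card
            = uS ℓ C s i := by
          intro C
          rw [uS]
          apply filter_card_congr
          intro v
          rw [hfib_iff v, ← KT hi]
          constructor
          · rintro ⟨⟨hvC, _⟩, hp⟩
            exact ⟨hvC, hp⟩
          · rintro ⟨hvC, hp⟩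
            exact ⟨⟨hvC, by rw [KDf hc hi hp, hk]⟩, hp⟩
        rw [key C₁, key C₂, h s i]
      · have key : ∀ C : Submodule F (Fin n → F),
            (Finset.univ.filter fun v : Fin n → F =>
              (v ∈ C ∧ (idealCl le (supp v)).card = k) ∧ fibG ℓ v = (s, i)).card
            = 0 := by
          intro C
          rw [Finset.card_eq_zero, Finset.filter_eq_empty_iff]
          rintro v _ ⟨⟨_, hcl⟩, hp⟩
          rw [hfib_iff v, ← KT hi] at hp
          exact hk (by rw [← hcl, KDf hc hi hp])
        rw [key C₁, key C₂]
    · have key : ∀ C : Submodule F (Fin n → F),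
          (Finset.univ.filter fun v : Fin n → F =>
            (v ∈ C ∧ (idealCl le (supp v)).card = k) ∧ fibG ℓ v = (s, i)).card
          = 0 := by
        intro C
        rw [Finset.card_eq_zero, Finset.filter_eq_empty_iff]
        rintro v _ ⟨_, hp⟩
        rw [hfib_iff v, ← KT hi] at hp
        have : (supp v ∩ Lv ℓ s).card ≤ (Lv ℓ s).card :=
          Finset.card_le_card Finset.inter_subset_right
        omega
      rw [key C₁, key C₂]

end Char

lemma CNT {A L : Finset (Fin n)} (hA : A ⊆ L) (m : ℕ) :
    ((L.powersetCard m).filter fun B => A ⊆ B).card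
      = if A.card ≤ m then (L.card - A.card).choose (m - A.card) else 0 := by
  by_cases h : A.card ≤ m
  · rw [if_pos h]
    have hcard : (L \ A).card = L.card - A.card := Finset.card_sdiff_of_subset hA
    rw [← hcard, ← Finset.card_powersetCard]
    apply Finset.card_bij (fun B _ => B \ A)
    · intro B hB
      rw [Finset.mem_filter, Finset.mem_powersetCard] at hB
      rw [Finset.mem_powersetCard]
      refine ⟨Finset.sdiff_subset_sdiff hB.1.1 (Finset.Subset.refl A), ?_⟩
      rw [Finset.card_sdiff_of_subset hB.2, hB.1.2]
    · intro B₁ h₁ B₂ h₂ heq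
      rw [Finset.mem_filter] at h₁ h₂
      have e₁ := Finset.sdiff_union_of_subset h₁.2
      have e₂ := Finset.sdiff_union_of_subset h₂.2
      rw [← e₁, ← e₂, heq]
    · intro B' hB'
      rw [Finset.mem_powersetCard] at hB'
      have hdisj : Disjoint B' A := Finset.disjoint_of_subset_left hB'.1 Finset.sdiff_disjoint
      refine ⟨B' ∪ A, ?_, ?_⟩
      · rw [Finset.mem_filter, Finset.mem_powersetCard]
        refine ⟨⟨Finset.union_subset (hB'.1.trans (Finset.sdiff_subset)) hA, ?_⟩,
          Finset.subset_union_right⟩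
        rw [Finset.card_union_of_disjoint hdisj, hB'.2]
        omega
      · rw [Finset.union_sdiff_cancel_right hdisj]
  · rw [if_neg h]
    rw [Finset.card_eq_zero, Finset.filter_eq_empty_iff]
    intro B hB hAB
    rw [Finset.mem_powersetCard] at hB
    have := Finset.card_le_card hAB
    omega

lemma GB {L M : Finset (Fin n)} (hd : Disjoint L M) (C : Submodule F (Fin n → F)) (m : ℕ) :
    ∑ B ∈ L.powersetCard m,
        (Finset.univ.filter fun v : Fin n → F => v ∈ C ∧ supp v ⊆ M ∪ B).card
      = ∑ i ∈ Finset.range (m + 1), (L.card - i).choose (m - i) *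
          (Finset.univ.filter fun v : Fin n → F =>
            v ∈ C ∧ supp v ⊆ M ∪ L ∧ (supp v ∩ L).card = i).card := by
  have hin : ∀ v : Fin n → F, (supp v ∩ L).card ≤ n := by
    intro v
    calc (supp v ∩ L).card ≤ Finset.univ.card := Finset.card_le_univ _
      _ = n := by simp
  have step2 : ∀ v : Fin n → F,
      (∑ B ∈ L.powersetCard m, if v ∈ C ∧ supp v ⊆ M ∪ B then 1 else 0)
      = if v ∈ C ∧ supp v ⊆ M ∪ L then
          (if (supp v ∩ L).card ≤ m then
            (L.card - (supp v ∩ L).card).choose (m - (supp v ∩ L).card) else 0)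
        else 0 := by
    intro v
    by_cases hv : v ∈ C ∧ supp v ⊆ M ∪ L
    · rw [if_pos hv]
      have hiff : ∀ B ∈ L.powersetCard m,
          ((v ∈ C ∧ supp v ⊆ M ∪ B) ↔ supp v ∩ L ⊆ B) := by
        intro B hB
        rw [Finset.mem_powersetCard] at hB
        constructor
        · rintro ⟨_, hsub⟩ x hx
          rw [Finset.mem_inter] at hx
          rcases Finset.mem_union.1 (hsub hx.1) with hM | hBmem
          · exact absurd hM (Finset.disjoint_left.1 hd hx.2)
          · exact hBmem
        · intro hsubB
          refine ⟨hv.1, fun x hx => ?_⟩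
          rcases Finset.mem_union.1 (hv.2 hx) with hM | hL
          · exact Finset.mem_union_left _ hM
          · exact Finset.mem_union_right _ (hsubB (Finset.mem_inter.2 ⟨hx, hL⟩))
      calc (∑ B ∈ L.powersetCard m, if v ∈ C ∧ supp v ⊆ M ∪ B then 1 else 0)
          = ∑ B ∈ L.powersetCard m, if supp v ∩ L ⊆ B then 1 else 0 :=
            Finset.sum_congr rfl fun B hB => if_congr (hiff B hB) rfl rfl
        _ = ((L.powersetCard m).filter fun B => supp v ∩ L ⊆ B).card :=
            (Finset.card_filter _ _).symm
        _ = _ := CNT Finset.inter_subset_right m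
    · rw [if_neg hv]
      apply Finset.sum_eq_zero
      intro B hB
      rw [Finset.mem_powersetCard] at hB
      rw [if_neg]
      rintro ⟨hvC, hsub⟩
      exact hv ⟨hvC, hsub.trans (Finset.union_subset_union_right hB.1)⟩
  calc (∑ B ∈ L.powersetCard m,
        (Finset.univ.filter fun v : Fin n → F => v ∈ C ∧ supp v ⊆ M ∪ B).card)
      = ∑ B ∈ L.powersetCard m, ∑ v : Fin n → F,
          if v ∈ C ∧ supp v ⊆ M ∪ B then 1 else 0 :=
        Finset.sum_congr rfl fun B _ => Finset.card_filter _ _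
    _ = ∑ v : Fin n → F, ∑ B ∈ L.powersetCard m,
          if v ∈ C ∧ supp v ⊆ M ∪ B then 1 else 0 := Finset.sum_comm
    _ = ∑ v : Fin n → F,
          if v ∈ C ∧ supp v ⊆ M ∪ L then
            (if (supp v ∩ L).card ≤ m then
              (L.card - (supp v ∩ L).card).choose (m - (supp v ∩ L).card) else 0)
          else 0 := Finset.sum_congr rfl fun v _ => step2 v
    _ = ∑ i ∈ Finset.range (n + 1), ∑ v ∈ Finset.univ.filter
          (fun v : Fin n → F => (supp v ∩ L).card = i),
          (if v ∈ C ∧ supp v ⊆ M ∪ L then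
            (if (supp v ∩ L).card ≤ m then
              (L.card - (supp v ∩ L).card).choose (m - (supp v ∩ L).card) else 0)
          else 0) := by
        rw [Finset.sum_fiberwise_of_maps_to (fun v _ => by
          rw [Finset.mem_range]
          have := hin v
          omega)]
    _ = ∑ i ∈ Finset.range (n + 1), (if i ≤ m then (L.card - i).choose (m - i) else 0) *
          (Finset.univ.filter fun v : Fin n → F =>
            v ∈ C ∧ supp v ⊆ M ∪ L ∧ (supp v ∩ L).card = i).card := by
        apply Finset.sum_congr rfl
        intro i _
        rw [Finset.sum_filter, Finset.card_filter, Finset.mul_sum]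
        apply Finset.sum_congr rfl
        intro v _
        by_cases h1 : (supp v ∩ L).card = i
        · by_cases h2 : v ∈ C ∧ supp v ⊆ M ∪ L
          · simp [h1, h2.1, h2.2]
          · simp [h1, h2]
        · simp [h1]
    _ = ∑ i ∈ Finset.range (m + 1), (L.card - i).choose (m - i) *
          (Finset.univ.filter fun v : Fin n → F =>
            v ∈ C ∧ supp v ⊆ M ∪ L ∧ (supp v ∩ L).card = i).card := by
        set Nc : ℕ → ℕ := fun i => (Finset.univ.filter fun v : Fin n → F =>
            v ∈ C ∧ supp v ⊆ M ∪ L ∧ (supp v ∩ L).card = i).card with hNc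
        have h1 : Finset.range (min (n+1) (m+1)) ⊆ Finset.range (n+1) :=
          Finset.range_subset_range.2 (min_le_left _ _)
        have h2 : Finset.range (min (n+1) (m+1)) ⊆ Finset.range (m+1) :=
          Finset.range_subset_range.2 (min_le_right _ _)
        have e1 : (∑ i ∈ Finset.range (min (n+1) (m+1)),
              (if i ≤ m then (L.card - i).choose (m - i) else 0) * Nc i)
            = ∑ i ∈ Finset.range (n+1),
              (if i ≤ m then (L.card - i).choose (m - i) else 0) * Nc i := by
          apply Finset.sum_subset h1
          intro x hx hnx
          rw [Finset.mem_range] at hx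
          rw [Finset.mem_range] at hnx
          rw [if_neg (by omega), zero_mul]
        have e2 : (∑ i ∈ Finset.range (min (n+1) (m+1)),
              (if i ≤ m then (L.card - i).choose (m - i) else 0) * Nc i)
            = ∑ i ∈ Finset.range (m+1), (L.card - i).choose (m - i) * Nc i := by
          rw [Finset.sum_subset h2 (fun x hx hnx => ?_)]
          · apply Finset.sum_congr rfl
            intro i hi
            by_cases him : i ≤ m
            · rw [if_pos him]
            · rw [Finset.mem_range] at hi
              omega
          · rw [Finset.mem_range] at hx
            rw [Finset.mem_range] at hnx
            have hzero : Nc x = 0 := by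
              rw [hNc, Finset.card_eq_zero, Finset.filter_eq_empty_iff]
              rintro v _ ⟨_, _, hcard⟩
              have := hin v
              omega
            rw [hzero, mul_zero]
        rw [← e1, e2]


def Ab (ℓ : Fin n → ℕ) (s : ℕ) : Finset (Fin n) := Finset.univ.filter fun i => s < ℓ i

lemma mem_Ab {ℓ : Fin n → ℕ} {s : ℕ} {k : Fin n} : k ∈ Ab ℓ s ↔ s < ℓ k := by simp [Ab]

def uD (ℓ : Fin n → ℕ) (C : Submodule F (Fin n → F)) (s i : ℕ) : ℕ :=
  (Finset.univ.filter fun v : Fin n → F =>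
    v ∈ C ∧ supp v ⊆ Ab ℓ s ∪ Lv ℓ s ∧ (supp v ∩ Lv ℓ s).card = i).card

lemma cw_univ (C : Submodule F (Fin n → F)) : cw C Finset.univ = cC C := by
  rw [cw, cC]
  apply filter_card_congr
  intro v
  exact ⟨fun h => h.1, fun h => ⟨h, Finset.subset_univ _⟩⟩

lemma cw_empty (C : Submodule F (Fin n → F)) : cw C ∅ = 1 := by
  rw [cw]
  rw [filter_card_congr (q := fun v : Fin n → F => v = 0) (fun v => ?_)]
  · rw [Finset.filter_eq']
    simp
  · constructor
    · rintro ⟨_, hsub⟩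
      exact supp_eq_empty.1 (Finset.subset_empty.1 hsub)
    · rintro rfl
      exact ⟨C.zero_mem, by simp [supp_eq_empty.2 rfl]⟩

lemma compl_AbA {ℓ : Fin n → ℕ} {s : ℕ} {A : Finset (Fin n)} (hA : A ⊆ Lv ℓ s) :
    (Ab ℓ s ∪ A)ᶜ = Bl ℓ s ∪ (Lv ℓ s \ A) := by
  ext k
  rw [Finset.mem_compl, Finset.mem_union, Finset.mem_union, Finset.mem_sdiff, mem_Ab, mem_Bl,
    mem_Lv]
  constructor
  · intro h
    push_neg at h
    obtain ⟨h1, h2⟩ := h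
    rcases Nat.lt_trichotomy (ℓ k) s with h3 | h3 | h3
    · exact Or.inl h3
    · exact Or.inr ⟨h3, h2⟩
    · omega
  · rintro (h | ⟨h1, h2⟩) hmem
    · rcases hmem with h4 | h4
      · omega
      · have := mem_Lv.1 (hA h4); omega
    · rcases hmem with h4 | h4
      · omega
      · exact h2 h4

lemma S5 {ℓ : Fin n → ℕ} (C : Submodule F (Fin n → F)) (s j : ℕ) (hj : j ≤ (Lv ℓ s).card) :
    (∑ A ∈ (Lv ℓ s).powersetCard j, cw (dualCode C) (Ab ℓ s ∪ A)) * cC C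
      = (Fintype.card F) ^ (j + (Ab ℓ s).card) *
        ∑ B ∈ (Lv ℓ s).powersetCard ((Lv ℓ s).card - j), cw C (Bl ℓ s ∪ B) := by
  rw [Finset.sum_mul]
  have hterm : ∀ A ∈ (Lv ℓ s).powersetCard j,
      cw (dualCode C) (Ab ℓ s ∪ A) * cC C
        = (Fintype.card F) ^ (j + (Ab ℓ s).card) * cw C (Bl ℓ s ∪ (Lv ℓ s \ A)) := by
    intro A hA
    rw [Finset.mem_powersetCard] at hA
    have hdisj : Disjoint (Ab ℓ s) A := by
      rw [Finset.disjoint_left]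
      intro a ha hA2
      have := mem_Lv.1 (hA.1 hA2)
      rw [mem_Ab] at ha
      omega
    have hcard : (Ab ℓ s ∪ A).card = j + (Ab ℓ s).card := by
      rw [Finset.card_union_of_disjoint hdisj, hA.2]
      omega
    rw [KL C (Ab ℓ s ∪ A), hcard, compl_AbA hA.1]
  rw [Finset.sum_congr rfl hterm, ← Finset.mul_sum]
  congr 1
  apply Finset.sum_nbij' (i := fun A => Lv ℓ s \ A) (j := fun B => Lv ℓ s \ B)
  · intro A hA
    rw [Finset.mem_powersetCard] at hA ⊢
    exact ⟨Finset.sdiff_subset, by rw [Finset.card_sdiff_of_subset hA.1, hA.2]⟩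
  · intro B hB
    rw [Finset.mem_powersetCard] at hB ⊢
    refine ⟨Finset.sdiff_subset, ?_⟩
    rw [Finset.card_sdiff_of_subset hB.1, hB.2]
    omega
  · intro A hA
    rw [Finset.mem_powersetCard] at hA
    exact Finset.sdiff_sdiff_eq_self hA.1
  · intro B hB
    rw [Finset.mem_powersetCard] at hB
    exact Finset.sdiff_sdiff_eq_self hB.1
  · intro A _
    rfl

lemma S6 {Lc : ℕ} {u₁ u₂ : ℕ → ℕ}
    (h : ∀ j, (∑ i ∈ Finset.range (j+1), (Lc - i).choose (j - i) * u₁ i)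
            = ∑ i ∈ Finset.range (j+1), (Lc - i).choose (j - i) * u₂ i) :
    ∀ j, u₁ j = u₂ j := by
  intro j
  induction j using Nat.strong_induction_on with
  | _ j ih =>
    have hj := h j
    rw [Finset.sum_range_succ, Finset.sum_range_succ] at hj
    have hsum : (∑ i ∈ Finset.range j, (Lc - i).choose (j - i) * u₁ i)
        = ∑ i ∈ Finset.range j, (Lc - i).choose (j - i) * u₂ i :=
      Finset.sum_congr rfl fun i hi => by rw [ih i (Finset.mem_range.1 hi)]
    rw [hsum] at hj
    simp only [Nat.sub_self, Nat.choose_zero_right, one_mul] at hj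
    omega

end Aux14

/-- Theorem 4.1(ii), (a) ⇒ (b): if `P` is hierarchical then `E_C` is of MacWilliams type. -/
theorem stmt_14 {n : ℕ} (hn : 0 < n) (le : Fin n → Fin n → Prop)
    [IsPartialOrder (Fin n) le]
    (F : Type) [Field F] [Fintype F]
    (hhier : IsHierarchical le) :
    IsMacWilliamsType F le (fun A B => A.card = B.card) := by
  classical
  obtain ⟨ℓ, hℓ⟩ := hhier
  have hc : ∀ i j, le i j ↔ i = j ∨ ℓ i < ℓ j := by
    intro i j
    constructor
    · intro h
      by_cases hij : i = j
      · exact Or.inl hij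
      · exact Or.inr ((hℓ i j).1 ⟨h, hij⟩)
    · rintro (rfl | hlt)
      · exact refl_of le i
      · exact ((hℓ i j).2 hlt).1
  intro C₁ C₂ hAE J hJ
  have htrans : ∀ a b c : Fin n, le a b → le b c → le a c := fun a b c hab hbc =>
    IsTrans.trans a b c hab hbc
  have AE_eq : ∀ (C : Submodule F (Fin n → F)) (I : Finset (Fin n)),
      AE le (fun A B => A.card = B.card) C I = Aux14.cwk le C I.card := by
    intro C I
    simp only [AE, sphE, Finset.filter_filter, Aux14.cwk]
    exact Aux14.filter_card_congr fun v => and_comm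
  have H : ∀ k, Aux14.cwk le C₁ k = Aux14.cwk le C₂ k := by
    intro k
    by_cases hex : ∃ v : Fin n → F, (v ∈ C₁ ∨ v ∈ C₂) ∧ (idealCl le (supp v)).card = k
    · obtain ⟨v₀, _, hv₀⟩ := hex
      have hI : IsIdeal le (idealCl le (supp v₀)) := by
        intro a ha b hba
        rw [idealCl, Finset.mem_filter] at ha ⊢
        obtain ⟨_, c, hc, hac⟩ := ha
        exact ⟨Finset.mem_univ b, c, hc, htrans b a c hba hac⟩
      have h1 := hAE _ hI
      rw [AE_eq, AE_eq, hv₀] at h1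
      exact h1
    · have z : ∀ C : Submodule F (Fin n → F), (∀ v : Fin n → F, v ∈ C → v ∈ C₁ ∨ v ∈ C₂) →
          Aux14.cwk le C k = 0 := by
        intro C hsub
        rw [Aux14.cwk, Finset.card_eq_zero, Finset.filter_eq_empty_iff]
        rintro v _ ⟨hvC, hcl⟩
        exact hex ⟨v, hsub v hvC, hcl⟩
      rw [z C₁ (fun v hv => Or.inl hv), z C₂ (fun v hv => Or.inr hv)]
  have hUS : ∀ s i, Aux14.uS ℓ C₁ s i = Aux14.uS ℓ C₂ s i := Aux14.GA hc C₁ C₂ H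
  set L0 := Finset.univ.sup ℓ with hL0def
  have hle_L0 : ∀ k : Fin n, ℓ k ≤ L0 := fun k => Finset.le_sup (Finset.mem_univ k)
  have hcC : Aux14.cC C₁ = Aux14.cC C₂ := by
    have hLvE : Aux14.Lv ℓ (L0+1) = (∅ : Finset (Fin n)) := by
      apply Finset.eq_empty_of_forall_notMem
      intro k hk
      rw [Aux14.mem_Lv] at hk
      have := hle_L0 k
      omega
    have key : ∀ C : Submodule F (Fin n → F), Aux14.cC C = Aux14.uS ℓ C (L0+1) 0 := by
      intro C
      rw [Aux14.cC, Aux14.uS]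
      apply Aux14.filter_card_congr
      intro v
      constructor
      · intro hv
        refine ⟨hv, ?_, ?_⟩
        · intro k _
          rw [Aux14.mem_BlLv]
          have := hle_L0 k
          omega
        · rw [hLvE, Finset.inter_empty, Finset.card_empty]
      · exact fun hv => hv.1
    rw [key C₁, key C₂, hUS]
  have hcCD : Aux14.cC (dualCode C₁) = Aux14.cC (dualCode C₂) := by
    have key : ∀ C : Submodule F (Fin n → F),
        Aux14.cC (dualCode C) * Aux14.cC C
          = (Fintype.card F) ^ (Finset.univ : Finset (Fin n)).card := by
      intro C
      have h1 := Aux14.KL C Finset.univ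
      rw [Aux14.cw_univ, Finset.compl_univ, Aux14.cw_empty, mul_one] at h1
      exact h1
    have e := (key C₁).trans (key C₂).symm
    rw [hcC] at e
    exact Nat.eq_of_mul_eq_mul_right (Aux14.cC_pos C₂) e
  have hdLvAb : ∀ s, Disjoint (Aux14.Lv ℓ s) (Aux14.Ab ℓ s) := by
    intro s
    rw [Finset.disjoint_left]
    intro a ha hb
    rw [Aux14.mem_Lv] at ha
    rw [Aux14.mem_Ab] at hb
    omega
  have hdLvBl : ∀ s, Disjoint (Aux14.Lv ℓ s) (Aux14.Bl ℓ s) :=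
    fun s => Aux14.disj_Bl_Lv.symm
  have hH : ∀ s j,
      (∑ A ∈ (Aux14.Lv ℓ s).powersetCard j, Aux14.cw (dualCode C₁) (Aux14.Ab ℓ s ∪ A))
      = ∑ A ∈ (Aux14.Lv ℓ s).powersetCard j, Aux14.cw (dualCode C₂) (Aux14.Ab ℓ s ∪ A) := by
    intro s j
    by_cases hjn : j ≤ (Aux14.Lv ℓ s).card
    · have e1 := Aux14.S5 (ℓ := ℓ) C₁ s j hjn
      have e2 := Aux14.S5 (ℓ := ℓ) C₂ s j hjn
      have hW : (∑ B ∈ (Aux14.Lv ℓ s).powersetCard ((Aux14.Lv ℓ s).card - j),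
            Aux14.cw C₁ (Aux14.Bl ℓ s ∪ B))
          = ∑ B ∈ (Aux14.Lv ℓ s).powersetCard ((Aux14.Lv ℓ s).card - j),
            Aux14.cw C₂ (Aux14.Bl ℓ s ∪ B) := by
        simp only [Aux14.cw]
        rw [Aux14.GB (hdLvBl s) C₁, Aux14.GB (hdLvBl s) C₂]
        apply Finset.sum_congr rfl
        intro i _
        have h' := hUS s i
        rw [Aux14.uS, Aux14.uS] at h'
        rw [h']
      rw [hW, hcC] at e1
      have e3 := e1.trans e2.symm
      exact Nat.eq_of_mul_eq_mul_right (Aux14.cC_pos C₂) e3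
    · rw [Finset.powersetCard_eq_empty.2 (by omega)]
      simp
  have hUD : ∀ s i, Aux14.uD ℓ (dualCode C₁) s i = Aux14.uD ℓ (dualCode C₂) s i := by
    intro s
    apply Aux14.S6 (Lc := (Aux14.Lv ℓ s).card)
      (u₁ := fun i => Aux14.uD ℓ (dualCode C₁) s i)
      (u₂ := fun i => Aux14.uD ℓ (dualCode C₂) s i)
    intro j
    have h0 := hH s j
    simp only [Aux14.cw] at h0
    rw [Aux14.GB (hdLvAb s) (dualCode C₁), Aux14.GB (hdLvAb s) (dualCode C₂)] at h0
    simpa only [Aux14.uD] using h0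
  set ℓd : Fin n → ℕ := fun k => L0 - ℓ k with hℓdd
  have hcd : ∀ i j, (fun a b => le b a) i j ↔ i = j ∨ ℓd i < ℓd j := by
    intro i j
    simp only [hℓdd]
    rw [hc j i]
    have hi := hle_L0 i
    have hj := hle_L0 j
    constructor
    · rintro (rfl | hlt)
      · exact Or.inl rfl
      · exact Or.inr (by omega)
    · rintro (rfl | hlt)
      · exact Or.inl rfl
      · exact Or.inr (by omega)
  have hUSd : ∀ s i, Aux14.uS ℓd (dualCode C₁) s i = Aux14.uS ℓd (dualCode C₂) s i := by
    intro s i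
    by_cases hsL : s ≤ L0
    · have hB : Aux14.Bl ℓd s = Aux14.Ab ℓ (L0 - s) := by
        ext k
        rw [Aux14.mem_Bl, Aux14.mem_Ab]
        have := hle_L0 k
        simp only [hℓdd]
        omega
      have hL : Aux14.Lv ℓd s = Aux14.Lv ℓ (L0 - s) := by
        ext k
        rw [Aux14.mem_Lv, Aux14.mem_Lv]
        have := hle_L0 k
        simp only [hℓdd]
        omega
      have key : ∀ D : Submodule F (Fin n → F),
          Aux14.uS ℓd D s i = Aux14.uD ℓ D (L0 - s) i := by
        intro D
        rw [Aux14.uS, Aux14.uD, hB, hL]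
      rw [key (dualCode C₁), key (dualCode C₂), hUD]
    · have hBu : Aux14.Bl ℓd s = Finset.univ := by
        apply Finset.eq_univ_of_forall
        intro k
        rw [Aux14.mem_Bl]
        have := hle_L0 k
        simp only [hℓdd]
        omega
      have hLe : Aux14.Lv ℓd s = (∅ : Finset (Fin n)) := by
        apply Finset.eq_empty_of_forall_notMem
        intro k hk
        rw [Aux14.mem_Lv] at hk
        have := hle_L0 k
        simp only [hℓdd] at hk
        omega
      rcases Nat.eq_zero_or_pos i with rfl | hi
      · have key : ∀ D : Submodule F (Fin n → F), Aux14.uS ℓd D s 0 = Aux14.cC D := by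
          intro D
          rw [Aux14.uS, Aux14.cC]
          apply Aux14.filter_card_congr
          intro v
          constructor
          · exact fun hv => hv.1
          · intro hv
            refine ⟨hv, ?_, ?_⟩
            · intro k _
              rw [hBu]
              exact Finset.mem_union_left _ (Finset.mem_univ k)
            · rw [hLe, Finset.inter_empty, Finset.card_empty]
        rw [key (dualCode C₁), key (dualCode C₂), hcCD]
      · have key : ∀ D : Submodule F (Fin n → F), Aux14.uS ℓd D s i = 0 := by
          intro D
          rw [Aux14.uS, Finset.card_eq_zero, Finset.filter_eq_empty_iff]
          rintro v _ ⟨_, _, hcard⟩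
          rw [hLe, Finset.inter_empty, Finset.card_empty] at hcard
          omega
        rw [key (dualCode C₁), key (dualCode C₂)]
  have final := Aux14.GC hcd (dualCode C₁) (dualCode C₂) hUSd
  have hJle : J.card ≤ n := by
    have := Finset.card_le_univ J
    simpa using this
  have AED_eq : ∀ D : Submodule F (Fin n → F),
      AED le (fun A B => A.card = B.card) D J
        = Aux14.cwk (fun a b => le b a) D (n - J.card) := by
    intro D
    simp only [AED, sphED, Finset.filter_filter, Aux14.cwk]
    apply Aux14.filter_card_congr
    intro v
    constructor
    · rintro ⟨⟨K, hK, hKcard, hKcl⟩, hvD⟩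
      refine ⟨hvD, ?_⟩
      rw [hKcl, Finset.card_compl, hKcard]
      simp
    · rintro ⟨hvD, hcl⟩
      refine ⟨⟨(idealCl (fun a b => le b a) (supp v))ᶜ, ?_, ?_, ?_⟩, hvD⟩
      · intro a ha b hba
        rw [Finset.mem_compl] at ha ⊢
        intro hb
        rw [idealCl, Finset.mem_filter] at hb
        obtain ⟨_, c, hc, hcb⟩ := hb
        refine ha ?_
        rw [idealCl, Finset.mem_filter]
        exact ⟨Finset.mem_univ a, c, hc, htrans c b a hcb hba⟩
      · rw [Finset.card_compl, hcl]
        simp only [Fintype.card_fin]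
        omega
      · rw [compl_compl]
  rw [AED_eq (dualCode C₁), AED_eq (dualCode C₂)]
  exact final _


end
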